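/- arXiv:1702.05168 — 3 statements merged into one kernel-verified Lean document; each statement's English description precedes it below -/
import Mathlib

section
/- Let p, q ∈ (0,1) with p > q. Then for all sufficiently large n there exists a monotone coupling γ of the product measures Bernoulli(p)^n and Bernoulli(q)^n on {0,1}^n such that γ(100…0, 00…0) = p(1−p)^{n−1} and γ(010…0, 00…0) = p(1−p)^{n−1}; that is, the sequences 100^{n−2} and 010^{n−2} are coupled with the all-zero sequence with their full Bernoulli(p)^n-probability. -/
open Finset

lemma sum_prod_fin2 {n : ℕ} (f : Fin n → Fin 2 → ℝ) :
    ∑ x : Fin n → Fin 2, ∏ i, f i (x i) = ∏ i, (f i 0 + f i 1) := by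
  rw [← Fintype.prod_sum f]
  exact Finset.prod_congr rfl fun i _ => by rw [Fin.sum_univ_two]

lemma prod_ite_single {n : ℕ} (j : Fin n) (c d : ℝ) :
    ∏ i, (if i = j then c else d) = c * d ^ (n - 1) := by
  rw [← Finset.mul_prod_erase _ _ (Finset.mem_univ j), if_pos rfl]
  congr 1
  rw [Finset.prod_congr rfl (fun i hi => if_neg (Finset.ne_of_mem_erase hi)),
    Finset.prod_const, Finset.card_erase_of_mem (Finset.mem_univ j), Finset.card_univ,
    Fintype.card_fin]

lemma prod_ite_pair {n : ℕ} (j k : Fin n) (hjk : j ≠ k) (c d : ℝ) :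
    ∏ i, (if i = j ∨ i = k then c else d) = c ^ 2 * d ^ (n - 2) := by
  rw [← Finset.mul_prod_erase _ _ (Finset.mem_univ j),
    ← Finset.mul_prod_erase _ _ (Finset.mem_erase.2 ⟨Ne.symm hjk, Finset.mem_univ k⟩)]
  rw [if_pos (Or.inl rfl), if_pos (Or.inr rfl)]
  have h : ∀ i ∈ ((Finset.univ : Finset (Fin n)).erase j).erase k,
      (if i = j ∨ i = k then c else d) = d := by
    intro i hi
    have h1 := Finset.ne_of_mem_erase hi
    have h2 := Finset.ne_of_mem_erase (Finset.mem_of_mem_erase hi)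
    exact if_neg (by tauto)
  rw [Finset.prod_congr rfl h, Finset.prod_const,
    Finset.card_erase_of_mem (Finset.mem_erase.2 ⟨Ne.symm hjk, Finset.mem_univ k⟩),
    Finset.card_erase_of_mem (Finset.mem_univ j), Finset.card_univ, Fintype.card_fin]
  rw [show n - 1 - 1 = n - 2 from by omega]; ring

namespace Stmt1Aux

noncomputable def g (p q : ℝ) : Fin 2 → Fin 2 → ℝ := fun a b =>
  if a = 1 then (if b = 1 then q else p - q) else (if b = 1 then 0 else 1 - p)

noncomputable def f (p q : ℝ) (n : ℕ) : Fin n → Fin 2 → ℝ := fun i b =>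
  if (i : ℕ) < 2 then (if b = 1 then p - q else 0)
  else (if b = 1 then p - q else 1 - p)

def e1 (n : ℕ) : Fin n → Fin 2 := fun i => if (i : ℕ) = 0 then 1 else 0
def e2 (n : ℕ) : Fin n → Fin 2 := fun i => if (i : ℕ) = 1 then 1 else 0
def zb (n : ℕ) : Fin n → Fin 2 := fun _ => 0

noncomputable def gam0 (p q : ℝ) (n : ℕ) (x y : Fin n → Fin 2) : ℝ :=
  ∏ i, g p q (x i) (y i)

noncomputable def w (p q : ℝ) (n : ℕ) (x : Fin n → Fin 2) : ℝ :=
  ∏ i, f p q n i (x i)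

noncomputable def ind {α : Type*} [DecidableEq α] (a b : α) : ℝ := if a = b then 1 else 0

noncomputable def gam (p q : ℝ) (n : ℕ)
    (z : (Fin n → Fin 2) × (Fin n → Fin 2)) : ℝ :=
  gam0 p q n z.1 z.2
    + q * (1 - p) ^ (n - 1) * ind z.1 (e1 n) * (ind z.2 (zb n) - ind z.2 (e1 n))
    + q * (1 - p) ^ (n - 1) * ind z.1 (e2 n) * (ind z.2 (zb n) - ind z.2 (e2 n))
    + (q * (1 - p) ^ (n - 1) / ((p - q) ^ 2 * (1 - q) ^ (n - 2))) * w p q n z.1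
        * (ind z.2 (e1 n) + ind z.2 (e2 n) - 2 * ind z.2 (zb n))

lemma fin2cases (v : Fin 2) : v = 0 ∨ v = 1 := by omega

lemma sum_ind {α : Type*} [DecidableEq α] [Fintype α] (b : α) :
    ∑ a : α, ind a b = 1 := by
  simp [ind, Finset.sum_ite_eq']

section facts
variable {p q : ℝ} {n : ℕ}

lemma g_nonneg (hp1 : p < 1) (hq0 : 0 < q) (hpq : q < p) (a b : Fin 2) :
    0 ≤ g p q a b := by
  unfold g; split_ifs <;> linarith

lemma f_nonneg (hp1 : p < 1) (hpq : q < p) (i : Fin n) (b : Fin 2) :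
    0 ≤ f p q n i b := by
  unfold f; split_ifs <;> linarith

lemma gam0_nonneg (hp1 : p < 1) (hq0 : 0 < q) (hpq : q < p) (x y : Fin n → Fin 2) :
    0 ≤ gam0 p q n x y :=
  Finset.prod_nonneg fun i _ => g_nonneg hp1 hq0 hpq _ _

lemma w_nonneg (hp1 : p < 1) (hpq : q < p) (x : Fin n → Fin 2) :
    0 ≤ w p q n x :=
  Finset.prod_nonneg fun i _ => f_nonneg hp1 hpq _ _

lemma f_le_g (hp1 : p < 1) (i : Fin n) (b : Fin 2) :
    f p q n i b ≤ g p q b 0 := by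
  unfold f g
  split_ifs <;> first | linarith | simp_all

lemma w_le_gam0 (hp1 : p < 1) (hpq : q < p) (x : Fin n → Fin 2) :
    w p q n x ≤ gam0 p q n x (zb n) :=
  Finset.prod_le_prod (fun i _ => f_nonneg hp1 hpq _ _) (fun i _ => f_le_g hp1 _ _)

lemma gam0_margx (x : Fin n → Fin 2) :
    ∑ y : Fin n → Fin 2, gam0 p q n x y = ∏ i, (if x i = 1 then p else 1 - p) := by
  unfold gam0
  rw [sum_prod_fin2 (fun i b => g p q (x i) b)]
  refine Finset.prod_congr rfl fun i _ => ?_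
  rcases fin2cases (x i) with h | h <;> simp [h, g] <;> ring

lemma gam0_margy (y : Fin n → Fin 2) :
    ∑ x : Fin n → Fin 2, gam0 p q n x y = ∏ i, (if y i = 1 then q else 1 - q) := by
  unfold gam0
  rw [sum_prod_fin2 (fun i b => g p q b (y i))]
  refine Finset.prod_congr rfl fun i _ => ?_
  rcases fin2cases (y i) with h | h <;> simp [h, g] <;> ring

end facts


section facts2
variable {p q : ℝ} {n : ℕ}

lemma sum_w (hn : 2 ≤ n) :
    ∑ x : Fin n → Fin 2, w p q n x = (p - q) ^ 2 * (1 - q) ^ (n - 2) := by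
  unfold w
  rw [sum_prod_fin2 (f p q n), ← prod_ite_pair (⟨0, by omega⟩ : Fin n) ⟨1, by omega⟩
    (by simp [Fin.ext_iff]) (p - q) (1 - q)]
  refine Finset.prod_congr rfl fun i _ => ?_
  by_cases h : (i : ℕ) < 2
  · rw [if_pos]
    · simp [f, h]
    · have : (i : ℕ) = 0 ∨ (i : ℕ) = 1 := by omega
      rcases this with h0 | h1
      · exact Or.inl (Fin.ext h0)
      · exact Or.inr (Fin.ext h1)
  · rw [if_neg]
    · simp only [f, if_neg h]
      norm_num
    · rintro (rfl | rfl) <;> simp at h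
  
lemma gam0_e1e1 (hn : 2 ≤ n) : gam0 p q n (e1 n) (e1 n) = q * (1 - p) ^ (n - 1) := by
  unfold gam0 e1
  rw [← prod_ite_single (⟨0, by omega⟩ : Fin n) q (1 - p)]
  refine Finset.prod_congr rfl fun i _ => ?_
  by_cases h : (i : ℕ) = 0 <;> simp [g, h, Fin.ext_iff]

lemma gam0_e1zb (hn : 2 ≤ n) : gam0 p q n (e1 n) (zb n) = (p - q) * (1 - p) ^ (n - 1) := by
  unfold gam0 e1 zb
  rw [← prod_ite_single (⟨0, by omega⟩ : Fin n) (p - q) (1 - p)]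
  refine Finset.prod_congr rfl fun i _ => ?_
  by_cases h : (i : ℕ) = 0 <;> simp [g, h, Fin.ext_iff]

lemma gam0_e2e2 (hn : 2 ≤ n) : gam0 p q n (e2 n) (e2 n) = q * (1 - p) ^ (n - 1) := by
  unfold gam0 e2
  rw [← prod_ite_single (⟨1, by omega⟩ : Fin n) q (1 - p)]
  refine Finset.prod_congr rfl fun i _ => ?_
  by_cases h : (i : ℕ) = 1 <;> simp [g, h, Fin.ext_iff]

lemma gam0_e2zb (hn : 2 ≤ n) : gam0 p q n (e2 n) (zb n) = (p - q) * (1 - p) ^ (n - 1) := by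
  unfold gam0 e2 zb
  rw [← prod_ite_single (⟨1, by omega⟩ : Fin n) (p - q) (1 - p)]
  refine Finset.prod_congr rfl fun i _ => ?_
  by_cases h : (i : ℕ) = 1 <;> simp [g, h, Fin.ext_iff]

lemma w_e1 (hn : 2 ≤ n) : w p q n (e1 n) = 0 := by
  apply Finset.prod_eq_zero (Finset.mem_univ (⟨1, by omega⟩ : Fin n))
  simp [f, e1]

lemma w_e2 (hn : 2 ≤ n) : w p q n (e2 n) = 0 := by
  apply Finset.prod_eq_zero (Finset.mem_univ (⟨0, by omega⟩ : Fin n))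
  simp [f, e2]

lemma w_ne_zero (hn : 2 ≤ n) {x : Fin n → Fin 2} (hw : w p q n x ≠ 0) :
    x ⟨0, by omega⟩ = 1 ∧ x ⟨1, by omega⟩ = 1 := by
  rw [w, Finset.prod_ne_zero_iff] at hw
  constructor
  · have h0 := hw ⟨0, by omega⟩ (Finset.mem_univ _)
    by_cases hx : x ⟨0, by omega⟩ = 1
    · exact hx
    · simp [f, hx] at h0
  · have h1 := hw ⟨1, by omega⟩ (Finset.mem_univ _)
    by_cases hx : x ⟨1, by omega⟩ = 1
    · exact hx
    · simp [f, hx] at h1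

lemma e1_ne_e2 (hn : 2 ≤ n) : e1 n ≠ e2 n := by
  intro h
  have := congrFun h ⟨0, by omega⟩
  simp [e1, e2] at this

lemma e1_ne_zb (hn : 2 ≤ n) : e1 n ≠ zb n := by
  intro h
  have := congrFun h ⟨0, by omega⟩
  simp [e1, zb] at this

lemma e2_ne_zb (hn : 2 ≤ n) : e2 n ≠ zb n := by
  intro h
  have := congrFun h ⟨1, by omega⟩
  simp [e2, zb] at this

end facts2


section key
variable {p q : ℝ} {n : ℕ}

lemma key (hp0 : 0 < p) (hp1 : p < 1) (hq0 : 0 < q) (hq1 : q < 1) (hpq : q < p)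
    (hn : 2 ≤ n)
    (hMδ : 2 * (q * (1 - p) ^ (n - 1)) ≤ (p - q) ^ 2 * (1 - q) ^ (n - 2)) :
      ∃ γ : (Fin n → Fin 2) × (Fin n → Fin 2) → ℝ,
        (∀ z, 0 ≤ γ z) ∧ (∑ z : (Fin n → Fin 2) × (Fin n → Fin 2), γ z = 1) ∧
        (∀ x : Fin n → Fin 2,
          ∑ y : Fin n → Fin 2, γ (x, y)
            = ∏ i : Fin n, (if x i = 1 then p else 1 - p)) ∧
        (∀ y : Fin n → Fin 2,
          ∑ x : Fin n → Fin 2, γ (x, y)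
            = ∏ i : Fin n, (if y i = 1 then q else 1 - q)) ∧
        (∀ x y : Fin n → Fin 2, γ (x, y) ≠ 0 → ∀ i, y i ≤ x i) ∧
        γ (fun i => if (i : ℕ) = 0 then 1 else 0, fun _ => 0) = p * (1 - p) ^ (n - 1) ∧
        γ (fun i => if (i : ℕ) = 1 then 1 else 0, fun _ => 0) = p * (1 - p) ^ (n - 1) := by
  have hpq' : 0 < p - q := sub_pos.2 hpq
  have hq1' : 0 < 1 - q := by linarith
  have hp1' : 0 < 1 - p := by linarith
  have hδ0 : 0 < q * (1 - p) ^ (n - 1) := by positivity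
  have hM0 : 0 < (p - q) ^ 2 * (1 - q) ^ (n - 2) := by positivity
  have hM0' : (p - q) ^ 2 * (1 - q) ^ (n - 2) ≠ 0 := ne_of_gt hM0
  refine ⟨gam p q n, ?_, ?_, ?_, ?_, ?_, ?_, ?_⟩
  · -- nonnegativity
    rintro ⟨x, y⟩
    simp only [gam]
    by_cases hx1 : x = e1 n
    · subst hx1
      rw [show ind (e1 n) (e1 n) = (1:ℝ) from by simp [ind],
        show ind (e1 n) (e2 n) = (0:ℝ) from by simp [ind, e1_ne_e2 hn], w_e1 hn]
      by_cases hy1 : y = e1 n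
      · subst hy1
        rw [gam0_e1e1 hn,
          show ind (e1 n) (zb n) = (0:ℝ) from by simp [ind, e1_ne_zb hn],
          show ind (e1 n) (e1 n) = (1:ℝ) from by simp [ind]]
        ring_nf
        norm_num
      · have hg := gam0_nonneg hp1 hq0 hpq (e1 n) y
        rw [show ind y (e1 n) = (0:ℝ) from by simp [ind, hy1]]
        by_cases hyz : y = zb n
        · rw [show ind y (zb n) = (1:ℝ) from by simp [ind, hyz]]; nlinarith
        · rw [show ind y (zb n) = (0:ℝ) from by simp [ind, hyz]]; nlinarith
    · by_cases hx2 : x = e2 n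
      · subst hx2
        rw [show ind (e2 n) (e2 n) = (1:ℝ) from by simp [ind],
          show ind (e2 n) (e1 n) = (0:ℝ) from by simp [ind, (e1_ne_e2 hn).symm], w_e2 hn]
        by_cases hy2 : y = e2 n
        · subst hy2
          rw [gam0_e2e2 hn,
            show ind (e2 n) (zb n) = (0:ℝ) from by simp [ind, e2_ne_zb hn],
            show ind (e2 n) (e2 n) = (1:ℝ) from by simp [ind]]
          ring_nf
          norm_num
        · have hg := gam0_nonneg hp1 hq0 hpq (e2 n) y
          rw [show ind y (e2 n) = (0:ℝ) from by simp [ind, hy2]]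
          by_cases hyz : y = zb n
          · rw [show ind y (zb n) = (1:ℝ) from by simp [ind, hyz]]; nlinarith
          · rw [show ind y (zb n) = (0:ℝ) from by simp [ind, hyz]]; nlinarith
      · rw [show ind x (e1 n) = (0:ℝ) from by simp [ind, hx1],
          show ind x (e2 n) = (0:ℝ) from by simp [ind, hx2]]
        have hg := gam0_nonneg hp1 hq0 hpq x y
        have hw0 := w_nonneg hp1 hpq x
        have hdm : 0 < q * (1 - p) ^ (n - 1) / ((p - q) ^ 2 * (1 - q) ^ (n - 2)) :=
          div_pos hδ0 hM0
        by_cases hyz : y = zb n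
        · subst hyz
          rw [show ind (zb n) (e1 n) = (0:ℝ) from by simp [ind, (e1_ne_zb hn).symm],
            show ind (zb n) (e2 n) = (0:ℝ) from by simp [ind, (e2_ne_zb hn).symm],
            show ind (zb n) (zb n) = (1:ℝ) from by simp [ind]]
          have hwle := w_le_gam0 hp1 hpq x
          have h2 : 2 * (q * (1 - p) ^ (n - 1)) / ((p - q) ^ 2 * (1 - q) ^ (n - 2)) ≤ 1 :=
            (div_le_one hM0).2 hMδ
          have h3 := mul_le_mul_of_nonneg_right h2 hw0
          rw [one_mul] at h3
          have h4 : 2 * (q * (1 - p) ^ (n - 1)) / ((p - q) ^ 2 * (1 - q) ^ (n - 2)) * w p q n x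
              = 2 * (q * (1 - p) ^ (n - 1) / ((p - q) ^ 2 * (1 - q) ^ (n - 2)) * w p q n x) := by
            ring
          rw [h4] at h3
          nlinarith
        · rw [show ind y (zb n) = (0:ℝ) from by simp [ind, hyz]]
          have h1 : (0:ℝ) ≤ ind y (e1 n) := by unfold ind; split_ifs <;> norm_num
          have h2 : (0:ℝ) ≤ ind y (e2 n) := by unfold ind; split_ifs <;> norm_num
          nlinarith [mul_nonneg (mul_nonneg hdm.le hw0) (add_nonneg h1 h2)]
  · -- total mass
    rw [Fintype.sum_prod_type]
    have hxm : ∀ x : Fin n → Fin 2,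
        ∑ y : Fin n → Fin 2, gam p q n (x, y)
          = ∏ i : Fin n, (if x i = 1 then p else 1 - p) := by
      intro x
      simp only [gam, Finset.sum_add_distrib, Finset.sum_sub_distrib,
        ← Finset.mul_sum, sum_ind, gam0_margx]
      ring
    simp only [hxm]
    have h := sum_prod_fin2 (fun (_ : Fin n) (b : Fin 2) => if b = 1 then p else 1 - p)
    simp only [] at h
    rw [h]
    simp
  · -- x marginal
    intro x
    simp only [gam, Finset.sum_add_distrib, Finset.sum_sub_distrib,
      ← Finset.mul_sum, sum_ind, gam0_margx]
    ring
  · -- y marginal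
    intro y
    simp only [gam, Finset.sum_add_distrib, ← Finset.sum_mul, ← Finset.mul_sum,
      sum_ind, sum_w hn, gam0_margy]
    field_simp
    ring
  · -- monotonicity
    intro x y hne i
    by_contra hle
    have hlt : x i < y i := not_le.mp hle
    have hx0 : x i = 0 := by omega
    have hy1 : y i = 1 := by omega
    apply hne
    simp only [gam]
    have hg0 : gam0 p q n x y = 0 :=
      Finset.prod_eq_zero (Finset.mem_univ i) (by rw [hx0, hy1]; simp [g])
    have hyzb : y ≠ zb n := by
      intro h
      have := congrFun h i
      rw [hy1] at this
      simp [zb] at this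
    have h1 : ind x (e1 n) * (ind y (zb n) - ind y (e1 n)) = 0 := by
      by_cases hx : x = e1 n
      · have hy' : y ≠ e1 n := by
          intro hY
          have hxy : x i = y i := by rw [hx, hY]
          rw [hx0, hy1] at hxy
          exact absurd hxy (by decide)
        simp [ind, hy', hyzb]
      · simp [ind, hx]
    have h2 : ind x (e2 n) * (ind y (zb n) - ind y (e2 n)) = 0 := by
      by_cases hx : x = e2 n
      · have hy' : y ≠ e2 n := by
          intro hY
          have hxy : x i = y i := by rw [hx, hY]
          rw [hx0, hy1] at hxy
          exact absurd hxy (by decide)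
        simp [ind, hy', hyzb]
      · simp [ind, hx]
    have h3 : w p q n x * (ind y (e1 n) + ind y (e2 n) - 2 * ind y (zb n)) = 0 := by
      by_cases hw : w p q n x = 0
      · rw [hw, zero_mul]
      · obtain ⟨hxa, hxb⟩ := w_ne_zero hn hw
        have hy1' : y ≠ e1 n := by
          intro hY
          have hi : (i : ℕ) = 0 := by
            by_contra hi
            rw [hY] at hy1
            simp [e1, hi] at hy1
          have hieq : i = ⟨0, by omega⟩ := Fin.ext hi
          rw [hieq] at hx0
          rw [hx0] at hxa
          exact absurd hxa (by decide)
        have hy2' : y ≠ e2 n := by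
          intro hY
          have hi : (i : ℕ) = 1 := by
            by_contra hi
            rw [hY] at hy1
            simp [e2, hi] at hy1
          have hieq : i = ⟨1, by omega⟩ := Fin.ext hi
          rw [hieq] at hx0
          rw [hx0] at hxb
          exact absurd hxb (by decide)
        simp [ind, hy1', hy2', hyzb]
    linear_combination hg0 + q * (1 - p) ^ (n - 1) * h1 + q * (1 - p) ^ (n - 1) * h2
      + q * (1 - p) ^ (n - 1) / ((p - q) ^ 2 * (1 - q) ^ (n - 2)) * h3
  · -- special value e1
    show gam p q n (e1 n, zb n) = p * (1 - p) ^ (n - 1)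
    simp only [gam]
    rw [show ind (e1 n) (e1 n) = (1:ℝ) from by simp [ind],
      show ind (e1 n) (e2 n) = (0:ℝ) from by simp [ind, e1_ne_e2 hn],
      show ind (zb n) (zb n) = (1:ℝ) from by simp [ind],
      show ind (zb n) (e1 n) = (0:ℝ) from by simp [ind, (e1_ne_zb hn).symm],
      w_e1 hn, gam0_e1zb hn]
    ring
  · -- special value e2
    show gam p q n (e2 n, zb n) = p * (1 - p) ^ (n - 1)
    simp only [gam]
    rw [show ind (e2 n) (e2 n) = (1:ℝ) from by simp [ind],
      show ind (e2 n) (e1 n) = (0:ℝ) from by simp [ind, (e1_ne_e2 hn).symm],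
      show ind (zb n) (zb n) = (1:ℝ) from by simp [ind],
      show ind (zb n) (e2 n) = (0:ℝ) from by simp [ind, (e2_ne_zb hn).symm],
      w_e2 hn, gam0_e2zb hn]
    ring

end key

end Stmt1Aux

/-- Key coupling, Lemma 2.2: for all sufficiently large `n` there is a
monotone coupling `γ` of Bernoulli(p)^n and Bernoulli(q)^n on `Fin n → Fin 2` that
couples each of the two special strings `100…0` and `010…0` with the all-zero string
with their full Bernoulli(p)^n-probability `p(1-p)^(n-1)`. Measures on the finite
space are represented as real-valued mass functions. -/
theorem stmt1 (p q : ℝ) (hp : p ∈ Set.Ioo (0:ℝ) 1) (hq : q ∈ Set.Ioo (0:ℝ) 1)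
    (hpq : q < p) :
    ∃ N : ℕ, ∀ n ≥ N,
      ∃ γ : (Fin n → Fin 2) × (Fin n → Fin 2) → ℝ,
        (∀ z, 0 ≤ γ z) ∧ (∑ z : (Fin n → Fin 2) × (Fin n → Fin 2), γ z = 1) ∧
        (∀ x : Fin n → Fin 2,
          ∑ y : Fin n → Fin 2, γ (x, y)
            = ∏ i : Fin n, (if x i = 1 then p else 1 - p)) ∧
        (∀ y : Fin n → Fin 2,
          ∑ x : Fin n → Fin 2, γ (x, y)
            = ∏ i : Fin n, (if y i = 1 then q else 1 - q)) ∧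
        (∀ x y : Fin n → Fin 2, γ (x, y) ≠ 0 → ∀ i, y i ≤ x i) ∧
        γ (fun i => if (i : ℕ) = 0 then 1 else 0, fun _ => 0) = p * (1 - p) ^ (n - 1) ∧
        γ (fun i => if (i : ℕ) = 1 then 1 else 0, fun _ => 0) = p * (1 - p) ^ (n - 1) := by
  obtain ⟨hp0, hp1⟩ := hp
  obtain ⟨hq0, hq1⟩ := hq
  have hpq' : 0 < p - q := sub_pos.2 hpq
  have hp1' : 0 < 1 - p := by linarith
  have hq1' : 0 < 1 - q := by linarith
  set r := (1 - p) / (1 - q) with hr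
  have hr0 : 0 ≤ r := le_of_lt (div_pos hp1' hq1')
  have hr1 : r < 1 := (div_lt_one hq1').2 (by linarith)
  have hε : 0 < (p - q) ^ 2 / (2 * (q * (1 - p))) := by positivity
  have htend := tendsto_pow_atTop_nhds_zero_of_lt_one hr0 hr1
  obtain ⟨K, hK⟩ := Filter.eventually_atTop.mp (htend.eventually (gt_mem_nhds hε))
  refine ⟨K + 2, fun n hnN => ?_⟩
  have hn : 2 ≤ n := by omega
  apply Stmt1Aux.key hp0 hp1 hq0 hq1 hpq hn
  have hm : K ≤ n - 2 := by omega
  have hrm : r ^ (n - 2) < (p - q) ^ 2 / (2 * (q * (1 - p))) := hK (n - 2) hm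
  have hpow : (1 - p) ^ (n - 2) = r ^ (n - 2) * (1 - q) ^ (n - 2) := by
    rw [← mul_pow, hr, div_mul_cancel₀ _ (ne_of_gt hq1')]
  have hn1 : n - 1 = (n - 2) + 1 := by omega
  rw [hn1, pow_succ, hpow]
  have hc : 0 < 2 * (q * (1 - p)) := by positivity
  have h2 : r ^ (n - 2) * (2 * (q * (1 - p))) < (p - q) ^ 2 := (lt_div_iff₀ hc).mp hrm
  nlinarith [mul_le_mul_of_nonneg_right h2.le (pow_nonneg hq1'.le (n - 2))]
end

section
/- Let κ and ι be probability measures on a finite totally ordered set [N] = {0,…,N−1}. Then κ stochastically dominates ι (i.e., Σ_{i≤j} κ(i) ≤ Σ_{i≤j} ι(i) for all j) if and only if there exists a coupling γ of κ and ι supported on pairs (a,b) with b ≤ a. -/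
/-- cumulative distribution function of a mass function on `Fin N` -/
def stmt7cdf (N : ℕ) (κ : Fin N → ℝ) (n : ℕ) : ℝ :=
  ∑ i : Fin N, if (i : ℕ) < n then κ i else 0

lemma stmt7cdf_zero (N : ℕ) (κ : Fin N → ℝ) : stmt7cdf N κ 0 = 0 := by
  simp [stmt7cdf]

lemma stmt7cdf_ge (N : ℕ) (κ : Fin N → ℝ) {n : ℕ} (h : N ≤ n) :
    stmt7cdf N κ n = ∑ i, κ i := by
  unfold stmt7cdf
  refine Finset.sum_congr rfl fun i _ => ?_
  rw [if_pos (lt_of_lt_of_le i.isLt h)]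

lemma stmt7cdf_succ (N : ℕ) (κ : Fin N → ℝ) {n : ℕ} (h : n < N) :
    stmt7cdf N κ (n + 1) = stmt7cdf N κ n + κ ⟨n, h⟩ := by
  unfold stmt7cdf
  have : ∀ i : Fin N, (if (i : ℕ) < n + 1 then κ i else 0)
      = (if (i : ℕ) < n then κ i else 0) + (if i = ⟨n, h⟩ then κ i else 0) := by
    intro i
    by_cases hi : i = ⟨n, h⟩
    · subst hi; simp
    · have : (i : ℕ) ≠ n := fun hc => hi (Fin.ext hc)
      split_ifs with h1 h2 <;> simp_all <;> omega
  rw [Finset.sum_congr rfl (fun i _ => this i), Finset.sum_add_distrib,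
    Finset.sum_ite_eq' Finset.univ (⟨n, h⟩ : Fin N) κ]
  simp

lemma stmt7cdf_mono (N : ℕ) (κ : Fin N → ℝ) (hκ0 : ∀ i, 0 ≤ κ i) :
    Monotone (stmt7cdf N κ) := by
  intro m n hmn
  refine Finset.sum_le_sum fun i _ => ?_
  split_ifs with h1 h2 h2
  · exact le_refl _
  · omega
  · exact hκ0 i
  · exact le_refl _

lemma stmt7cdf_Iic (N : ℕ) (κ : Fin N → ℝ) (j : Fin N) :
    ∑ i ∈ Finset.Iic j, κ i = stmt7cdf N κ ((j : ℕ) + 1) := by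
  unfold stmt7cdf
  rw [show Finset.Iic j = Finset.univ.filter (fun i : Fin N => (i : ℕ) < (j : ℕ) + 1) by
    ext i
    simp only [Finset.mem_Iic, Finset.mem_filter, Finset.mem_univ, true_and, Fin.le_def]
    omega]
  rw [Finset.sum_filter]

lemma stmt7cdf_nonneg (N : ℕ) (κ : Fin N → ℝ) (hκ0 : ∀ i, 0 ≤ κ i) (n : ℕ) :
    0 ≤ stmt7cdf N κ n :=
  Finset.sum_nonneg fun i _ => by split_ifs with h; exacts [hκ0 i, le_refl 0]

set_option maxRecDepth 10000 in
/-- pointwise clamp identity -/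
lemma stmt7clamp (x y u v : ℝ) (hxy : x ≤ y) (huv : u ≤ v) :
    min y (max x v) - min y (max x u) = max 0 (min y v - max x u) := by
  simp only [min_def, max_def]
  split_ifs <;> linarith

/-- telescoping lemma -/
lemma stmt7tele (N : ℕ) (g : ℕ → ℝ) (hg : Monotone g) (x y : ℝ)
    (hxy : x ≤ y) (hx : g 0 ≤ x) (hy : y ≤ g N) :
    ∑ i ∈ Finset.range N, max 0 (min y (g (i + 1)) - max x (g i)) = y - x := by
  have : ∀ i ∈ Finset.range N,
      max 0 (min y (g (i + 1)) - max x (g i))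
        = min y (max x (g (i + 1))) - min y (max x (g i)) := by
    intro i _
    exact (stmt7clamp x y (g i) (g (i + 1)) hxy (hg (Nat.le_succ i))).symm
  rw [Finset.sum_congr rfl this, Finset.sum_range_sub (fun t => min y (max x (g t)))]
  have h1 : min y (max x (g N)) = y := by
    rw [max_eq_right (le_trans hxy hy), min_eq_left hy]
  have h2 : min y (max x (g 0)) = x := by
    rw [max_eq_left hx, min_eq_right hxy]
  rw [h1, h2]

/-- Strassen's theorem, finite totally ordered case: κ stochastically
dominates ι iff there is a monotone coupling of κ and ι. Probability measures on
`Fin N` are represented as nonnegative real mass functions summing to 1. -/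
theorem stmt7 (N : ℕ) (κ ι : Fin N → ℝ)
    (hκ0 : ∀ i, 0 ≤ κ i) (hκ1 : ∑ i, κ i = 1)
    (hι0 : ∀ i, 0 ≤ ι i) (hι1 : ∑ i, ι i = 1) :
    (∀ j : Fin N, ∑ i ∈ Finset.Iic j, κ i ≤ ∑ i ∈ Finset.Iic j, ι i) ↔
      ∃ γ : Fin N × Fin N → ℝ,
        (∀ z, 0 ≤ γ z) ∧
        (∀ a : Fin N, ∑ b : Fin N, γ (a, b) = κ a) ∧
        (∀ b : Fin N, ∑ a : Fin N, γ (a, b) = ι b) ∧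
        (∀ a b : Fin N, γ (a, b) ≠ 0 → b ≤ a) := by
  constructor
  · -- hard direction: construct the quantile coupling
    intro hdom
    set K := stmt7cdf N κ with hK
    set I := stmt7cdf N ι with hI
    have hKmono := stmt7cdf_mono N κ hκ0
    have hImono := stmt7cdf_mono N ι hι0
    have hK0 : K 0 = 0 := stmt7cdf_zero N κ
    have hI0 : I 0 = 0 := stmt7cdf_zero N ι
    have hKN : ∀ n, N ≤ n → K n = 1 := fun n h => by rw [hK, stmt7cdf_ge N κ h, hκ1]
    have hIN : ∀ n, N ≤ n → I n = 1 := fun n h => by rw [hI, stmt7cdf_ge N ι h, hι1]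
    -- domination of cdfs
    have hdom' : ∀ n, K n ≤ I n := by
      intro n
      match n with
      | 0 => rw [hK0, hI0]
      | (m + 1) =>
        by_cases h : m < N
        · have := hdom ⟨m, h⟩
          rwa [stmt7cdf_Iic N κ ⟨m, h⟩, stmt7cdf_Iic N ι ⟨m, h⟩] at this
        · push_neg at h
          rw [hKN (m + 1) (le_trans h (Nat.le_succ m)),
            hIN (m + 1) (le_trans h (Nat.le_succ m))]
    refine ⟨fun z => max 0 (min (K ((z.1 : ℕ) + 1)) (I ((z.2 : ℕ) + 1))
        - max (K (z.1 : ℕ)) (I (z.2 : ℕ))), fun z => le_max_left _ _, ?_, ?_, ?_⟩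
    · -- first marginal
      intro a
      have hxy : K (a : ℕ) ≤ K ((a : ℕ) + 1) := hKmono (Nat.le_succ _)
      calc ∑ b : Fin N, max 0 (min (K ((a : ℕ) + 1)) (I ((b : ℕ) + 1))
              - max (K (a : ℕ)) (I (b : ℕ)))
          = ∑ i ∈ Finset.range N, max 0 (min (K ((a : ℕ) + 1)) (I (i + 1))
              - max (K (a : ℕ)) (I i)) :=
            Fin.sum_univ_eq_sum_range (fun i => max 0 (min (K ((a : ℕ) + 1)) (I (i + 1))
              - max (K (a : ℕ)) (I i))) N
        _ = K ((a : ℕ) + 1) - K (a : ℕ) := by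
            refine stmt7tele N I hImono _ _ hxy ?_ ?_
            · rw [hI0]; exact stmt7cdf_nonneg N κ hκ0 _
            · have h1 : K ((a : ℕ) + 1) ≤ K N := hKmono a.isLt
              rw [hIN N le_rfl, ← hKN N le_rfl]; exact h1
        _ = κ a := by
            rw [hK, stmt7cdf_succ N κ a.isLt]
            simp
    · -- second marginal
      intro b
      have hxy : I (b : ℕ) ≤ I ((b : ℕ) + 1) := hImono (Nat.le_succ _)
      calc ∑ a : Fin N, max 0 (min (K ((a : ℕ) + 1)) (I ((b : ℕ) + 1))
              - max (K (a : ℕ)) (I (b : ℕ)))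
          = ∑ i ∈ Finset.range N, max 0 (min (I ((b : ℕ) + 1)) (K (i + 1))
              - max (I (b : ℕ)) (K i)) := by
            rw [Finset.sum_congr rfl
              (fun a (_ : a ∈ Finset.univ) => by rw [min_comm (K ((a : ℕ) + 1)),
                max_comm (K (a : ℕ))])]
            exact Fin.sum_univ_eq_sum_range (fun i => max 0 (min (I ((b : ℕ) + 1)) (K (i + 1))
              - max (I (b : ℕ)) (K i))) N
        _ = I ((b : ℕ) + 1) - I (b : ℕ) := by
            refine stmt7tele N K hKmono _ _ hxy ?_ ?_
            · rw [hK0]; exact stmt7cdf_nonneg N ι hι0 _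
            · have h1 : I ((b : ℕ) + 1) ≤ I N := hImono b.isLt
              rw [hKN N le_rfl, ← hIN N le_rfl]; exact h1
        _ = ι b := by
            rw [hI, stmt7cdf_succ N ι b.isLt]
            simp
    · -- support
      intro a b hne
      by_contra hba
      push_neg at hba
      have h1 : K ((a : ℕ) + 1) ≤ I (b : ℕ) :=
        le_trans (hdom' ((a : ℕ) + 1)) (hImono hba)
      have : min (K ((a : ℕ) + 1)) (I ((b : ℕ) + 1)) - max (K (a : ℕ)) (I (b : ℕ)) ≤ 0 := by
        have := min_le_left (K ((a : ℕ) + 1)) (I ((b : ℕ) + 1))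
        have := le_max_right (K (a : ℕ)) (I (b : ℕ))
        linarith
      exact hne (max_eq_left this)
  · -- easy direction
    rintro ⟨γ, hγ0, hγκ, hγι, hγsupp⟩ j
    have step1 : ∀ a : Fin N, a ≤ j → κ a = ∑ b ∈ Finset.Iic j, γ (a, b) := by
      intro a ha
      rw [← hγκ a, show (∑ b : Fin N, γ (a, b)) = ∑ b ∈ Finset.univ, γ (a, b) from rfl]
      refine (Finset.sum_subset (Finset.subset_univ _) ?_).symm
      intro b _ hb
      by_contra hne
      have hba := hγsupp a b hne
      exact hb (Finset.mem_Iic.mpr (le_trans hba ha))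
    calc ∑ i ∈ Finset.Iic j, κ i
        = ∑ a ∈ Finset.Iic j, ∑ b ∈ Finset.Iic j, γ (a, b) := by
          exact Finset.sum_congr rfl fun a ha => step1 a (Finset.mem_Iic.mp ha)
      _ = ∑ b ∈ Finset.Iic j, ∑ a ∈ Finset.Iic j, γ (a, b) := Finset.sum_comm
      _ ≤ ∑ b ∈ Finset.Iic j, ∑ a : Fin N, γ (a, b) := by
          refine Finset.sum_le_sum fun b _ => ?_
          exact Finset.sum_le_sum_of_subset_of_nonneg (Finset.subset_univ _)
            (fun a _ _ => hγ0 (a, b))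
      _ = ∑ i ∈ Finset.Iic j, ι i := Finset.sum_congr rfl fun b _ => hγι b
end

section
/- Let X = (X_g)_{g∈F} be i.i.d. Bernoulli(1/2) random variables indexed by the free group F of rank 2 with generators a, b. Define φ(X)(g) = (X(g) ⊕ X(ga), X(g) ⊕ X(gb)) for each g ∈ F. Then (φ(X)(g))_{g∈F} is an i.i.d. family of random variables each uniformly distributed on {0,1}², i.e., φ pushes the product measure (1/2,1/2)^F forward to the product measure (1/4,1/4,1/4,1/4)^F. -/
open MeasureTheory ProbabilityTheory

set_option linter.unusedSectionVars false

section FreeGroupAux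
open FreeGroup
variable {α : Type*} [DecidableEq α]

lemma toWord_single_mul (i : α) (s : Bool) (h : FreeGroup α) :
    (FreeGroup.mk [(i,s)] * h).toWord =
      if h.toWord.head? = some (i, !s) then h.toWord.tail else (i,s) :: h.toWord := by
  conv_lhs => rw [show h = FreeGroup.mk h.toWord from (mk_toWord).symm]
  rw [mul_mk, show ([(i,s)] ++ h.toWord) = (i,s) :: h.toWord from rfl, toWord_mk,
    reduce.cons, reduce_toWord]
  rcases hw : h.toWord with _ | ⟨⟨j,u⟩, tl⟩
  · simp
  · simp only [List.head?_cons, List.tail_cons, Option.some_inj]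
    by_cases hc : (j, u) = (i, !s)
    · rw [if_pos (by simp [Prod.ext_iff] at hc ⊢; exact ⟨hc.1.symm, by simp [hc.2]⟩),
        if_pos hc]
    · rw [if_neg (by simp [Prod.ext_iff] at hc ⊢; intro h1; cases u <;> cases s <;>
        simp_all), if_neg hc]

lemma invRev_single (i : α) (s : Bool) : invRev [(i,s)] = [(i, !s)] := rfl

lemma head?_toWord_inv (g : FreeGroup α) :
    g⁻¹.toWord.head? = g.toWord.getLast?.map (fun p => (p.1, !p.2)) := by
  rw [toWord_inv, invRev]; simp

lemma length_mul_single (g : FreeGroup α) (i : α) (s : Bool) :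
    (g * FreeGroup.mk [(i,s)]).toWord.length =
      if g.toWord.getLast? = some (i, !s) then g.toWord.length - 1
      else g.toWord.length + 1 := by
  have h0 : (g * FreeGroup.mk [(i,s)])⁻¹ = FreeGroup.mk [(i, !s)] * g⁻¹ := by
    rw [mul_inv_rev, inv_mk, invRev_single]
  have h1 : (g * FreeGroup.mk [(i,s)]).toWord.length
      = (FreeGroup.mk [(i, !s)] * g⁻¹).toWord.length := by
    rw [← h0, toWord_inv, invRev_length]
  rw [h1, toWord_single_mul, head?_toWord_inv]
  have hlen : g⁻¹.toWord.length = g.toWord.length := by rw [toWord_inv, invRev_length]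
  by_cases hc : g.toWord.getLast? = some (i, !s)
  · rw [if_pos (by rw [hc]; simp), if_pos hc, List.length_tail, hlen]
  · rw [if_neg ?_, if_neg hc]
    · simp [hlen]
    · rcases hl : g.toWord.getLast? with _ | ⟨j,u⟩
      · simp
      · simp only [hl, Option.map_some, Option.some_inj] at *
        intro hcon
        apply hc
        rw [Prod.ext_iff] at hcon ⊢
        refine ⟨hcon.1, ?_⟩
        have h2 := hcon.2
        cases u <;> cases s <;> simp_all

lemma exists_leaf (C : Finset (FreeGroup α × α)) (hC : C.Nonempty) :
    ∃ e ∈ C, ∃ t : FreeGroup α, (t = e.1 ∨ t = e.1 * FreeGroup.of e.2) ∧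
      ∀ e' ∈ C, e' ≠ e → t ≠ e'.1 ∧ t ≠ e'.1 * FreeGroup.of e'.2 := by
  classical
  set V : Finset (FreeGroup α) :=
    C.image Prod.fst ∪ C.image (fun e => e.1 * FreeGroup.of e.2) with hV
  have hVne : V.Nonempty := by
    obtain ⟨e, he⟩ := hC
    exact ⟨e.1, Finset.mem_union_left _ (Finset.mem_image_of_mem Prod.fst he)⟩
  obtain ⟨t, htV, hmax⟩ := V.exists_max_image (fun g => g.toWord.length) hVne
  have hofmk : ∀ i : α, FreeGroup.of i = FreeGroup.mk [(i, true)] := fun i => rfl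
  have hinv : ∀ i : α, (FreeGroup.of i)⁻¹ = FreeGroup.mk [(i, false)] := by
    intro i; rw [hofmk, inv_mk]; rfl
  have char : ∀ e ∈ C, (t = e.1 ∨ t = e.1 * FreeGroup.of e.2) →
      (t.toWord.getLast? = some (e.2, false) ∧ e.1 = t) ∨
      (t.toWord.getLast? = some (e.2, true) ∧ e.1 = t * FreeGroup.mk [(e.2, false)]) := by
    rintro ⟨g, k⟩ he (rfl | hinc)
    · left
      have hmem : t * FreeGroup.of k ∈ V := by
        simp only [hV, Finset.mem_union, Finset.mem_image]
        exact Or.inr ⟨(t,k), he, rfl⟩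
      have hle := hmax _ hmem
      rw [hofmk k] at hle
      refine ⟨?_, rfl⟩
      by_contra hcon
      rw [length_mul_single, if_neg (by simpa using hcon)] at hle
      omega
    · right
      simp only at hinc
      have hg : g = t * FreeGroup.mk [(k, false)] := by
        rw [hinc, mul_assoc, ← hinv, mul_inv_cancel, mul_one]
      have hmem : g ∈ V := by
        simp only [hV, Finset.mem_union, Finset.mem_image]
        exact Or.inl ⟨(g,k), he, rfl⟩
      have hle := hmax _ hmem
      refine ⟨?_, hg⟩
      by_contra hcon
      rw [hg, length_mul_single, if_neg (by simpa using hcon)] at hle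
      omega
  have : ∃ e ∈ C, t = e.1 ∨ t = e.1 * FreeGroup.of e.2 := by
    simp only [hV, Finset.mem_union, Finset.mem_image] at htV
    rcases htV with ⟨e, he, h⟩ | ⟨e, he, h⟩
    · exact ⟨e, he, Or.inl h.symm⟩
    · exact ⟨e, he, Or.inr h.symm⟩
  obtain ⟨e₀, he₀, hinc₀⟩ := this
  refine ⟨e₀, he₀, t, hinc₀, ?_⟩
  intro e' he' hne
  have huniq : ∀ e ∈ C, (t = e.1 ∨ t = e.1 * FreeGroup.of e.2) → e = e₀ := by
    intro e he hinc
    have h1 := char e he hinc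
    have h2 := char e₀ he₀ hinc₀
    rcases h1 with ⟨hL1, hE1⟩ | ⟨hL1, hE1⟩ <;> rcases h2 with ⟨hL2, hE2⟩ | ⟨hL2, hE2⟩
    · have hk : e.2 = e₀.2 := by rw [hL1] at hL2; simpa [Prod.ext_iff] using hL2
      exact Prod.ext (by rw [hE1, hE2]) hk
    · exfalso; rw [hL1] at hL2; simpa [Prod.ext_iff] using hL2
    · exfalso; rw [hL1] at hL2; simpa [Prod.ext_iff] using hL2
    · have hk : e.2 = e₀.2 := by rw [hL1] at hL2; simpa [Prod.ext_iff] using hL2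
      exact Prod.ext (by rw [hE1, hE2, hk]) hk
  constructor
  · intro hcon; exact hne (huniq e' he' (Or.inl hcon))
  · intro hcon; exact hne (huniq e' he' (Or.inr hcon))

end FreeGroupAux

lemma fin2_cases' : ∀ y : Fin 2, y = 0 ∨ y = 1 := by decide
lemma fin2_add_iff : ∀ x v c : Fin 2, (x + v = c ↔ x = c + v) := by decide
lemma fin2_swap : ∀ x y c : Fin 2, x + y = c → y = c + x := by decide
lemma fin2_ne01 : (0 : Fin 2) ≠ 1 := by decide
lemma fin2_not0 : ∀ y : Fin 2, ¬ y = 0 → y = 1 := by decide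


open scoped Classical in
noncomputable def Sext {ι β : Type*} [Nonempty β] (S : Finset ι) (q : ↥S → β) (g : ι) : β :=
  if h : g ∈ S then q ⟨g, h⟩ else Classical.arbitrary β


section Meas
variable {Ω : Type*} [MeasurableSpace Ω] (μ : Measure Ω) [IsProbabilityMeasure μ]
variable (X : FreeGroup (Fin 2) → Ω → Fin 2)

lemma atom_meas (hXi : iIndepFun X μ)
    (hXd : ∀ g a, μ {ω | X g ω = a} = 1/2)
    (T : Finset (FreeGroup (Fin 2))) (v : FreeGroup (Fin 2) → Fin 2) :
    μ (⋂ u ∈ T, {ω | X u ω = v u}) = (1/2 : ENNReal) ^ T.card := by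
  have h := hXi.measure_inter_preimage_eq_mul T (sets := fun u => {v u})
    (fun u _ => measurableSet_singleton _)
  have hset : ∀ u : FreeGroup (Fin 2), X u ⁻¹' {v u} = {ω | X u ω = v u} := fun u => rfl
  simp only [hset] at h
  rw [h, Finset.prod_congr rfl (fun u _ => hXd u (v u)), Finset.prod_const]

lemma sum_partition {β : Type*} [Fintype β] [Nonempty β] [MeasurableSpace β]
    [MeasurableSingletonClass β]
    (Z : FreeGroup (Fin 2) → Ω → β) (hZ : ∀ g, Measurable (Z g))
    (S : Finset (FreeGroup (Fin 2))) (E : Set Ω) (hE : MeasurableSet E) :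
    μ E = ∑ q : (↥S → β), μ (E ∩ ⋂ g ∈ S, {ω | Z g ω = Sext S q g}) := by
  classical
  have hAmeas : ∀ q : ↥S → β, MeasurableSet (⋂ g ∈ S, {ω | Z g ω = Sext S q g}) := by
    intro q
    exact MeasurableSet.biInter S.countable_toSet
      (fun g _ => (hZ g) (measurableSet_singleton _))
  have hcover : E = ⋃ q : ↥S → β, (E ∩ ⋂ g ∈ S, {ω | Z g ω = Sext S q g}) := by
    ext ω
    constructor
    · intro hω
      refine Set.mem_iUnion.2 ⟨fun g => Z g.1 ω, hω, ?_⟩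
      simp only [Set.mem_iInter]
      intro g hg
      simp [Sext, hg]
    · rintro hω
      obtain ⟨q, hq, -⟩ := Set.mem_iUnion.1 hω
      exact hq
  have hdisj : Pairwise (Function.onFun Disjoint
      (fun q : ↥S → β => E ∩ ⋂ g ∈ S, {ω | Z g ω = Sext S q g})) := by
    intro q q' hqq'
    rw [Function.onFun, Set.disjoint_left]
    rintro ω ⟨-, h1⟩ ⟨-, h2⟩
    apply hqq'
    funext g
    simp only [Set.mem_iInter] at h1 h2
    have e1 := h1 g.1 g.2
    have e2 := h2 g.1 g.2
    simp only [Set.mem_setOf_eq, Sext, dif_pos g.2] at e1 e2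
    rw [← e1, ← e2]
  conv_lhs => rw [hcover]
  rw [measure_iUnion hdisj (fun q => hE.inter (hAmeas q)), tsum_fintype]

lemma add_meas (hXm : ∀ g, Measurable (X g)) (u v : FreeGroup (Fin 2)) (c : Fin 2) :
    MeasurableSet {ω | X u ω + X v ω = c} := by
  have h : {ω | X u ω + X v ω = c} = ⋃ d : Fin 2, ({ω | X u ω = d} ∩ {ω | X v ω = c + d}) := by
    ext ω
    simp only [Set.mem_setOf_eq, Set.mem_iUnion, Set.mem_inter_iff]
    constructor
    · intro h
      exact ⟨X u ω, rfl, fin2_swap _ _ _ h⟩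
    · rintro ⟨d, rfl, h⟩
      rw [h]
      have hfc : ∀ x c : Fin 2, x + (c + x) = c := by decide
      exact hfc _ _
  rw [h]
  exact MeasurableSet.iUnion fun d =>
    ((hXm u) (measurableSet_singleton d)).inter ((hXm v) (measurableSet_singleton _))


lemma peel (hXm : ∀ g, Measurable (X g))
    (hXi : iIndepFun X μ)
    (hXd : ∀ g a, μ {ω | X g ω = a} = 1/2)
    (T : Finset (FreeGroup (Fin 2))) (t : FreeGroup (Fin 2)) (ht : t ∉ T)
    (P : (FreeGroup (Fin 2) → Fin 2) → Prop)
    (hP : ∀ x y : FreeGroup (Fin 2) → Fin 2, (∀ u ∈ T, x u = y u) → (P x → P y))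
    (hE : MeasurableSet {ω | P fun u => X u ω}) (w : Fin 2) :
    μ ({ω | P fun u => X u ω} ∩ {ω | X t ω = w})
      = 1/2 * μ {ω | P fun u => X u ω} := by
  classical
  set E := {ω | P fun u => X u ω} with hEdef
  have hEw : MeasurableSet (E ∩ {ω | X t ω = w}) :=
    hE.inter ((hXm t) (measurableSet_singleton w))
  rw [sum_partition μ X (hXm) T E hE,
      sum_partition μ X (hXm) T (E ∩ {ω | X t ω = w}) hEw, Finset.mul_sum]
  apply Finset.sum_congr rfl
  intro q _
  set A := ⋂ g ∈ T, {ω | X g ω = Sext T q g} with hAdef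
  have hsub : ∀ ω, ω ∈ A → ((P fun u => X u ω) ↔ P (Sext T q)) := by
    intro ω hω
    simp only [hAdef, Set.mem_iInter, Set.mem_setOf_eq] at hω
    constructor
    · exact hP _ _ (fun u hu => hω u hu)
    · exact hP _ _ (fun u hu => (hω u hu).symm)
  by_cases hq : P (Sext T q)
  · have h1 : E ∩ A = A := by
      apply Set.inter_eq_self_of_subset_right
      intro ω hω; exact (hsub ω hω).2 hq
    have h2 : (E ∩ {ω | X t ω = w}) ∩ A = A ∩ {ω | X t ω = w} := by
      ext ω
      constructor
      · rintro ⟨⟨-, h⟩, hA⟩; exact ⟨hA, h⟩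
      · rintro ⟨hA, h⟩; exact ⟨⟨(hsub ω hA).2 hq, h⟩, hA⟩
    rw [h2, h1]
    have hAw : A ∩ {ω | X t ω = w}
        = ⋂ u ∈ insert t T, {ω | X u ω = Function.update (Sext T q) t w u} := by
      rw [Finset.set_biInter_insert, Set.inter_comm]
      congr 1
      · simp [Function.update_self]
      · rw [hAdef]
        apply Set.iInter₂_congr
        intro u hu
        rw [Function.update_of_ne (by rintro rfl; exact ht hu)]
    rw [hAw, atom_meas μ X hXi hXd (insert t T) _, hAdef,
      atom_meas μ X hXi hXd T _, Finset.card_insert_of_notMem ht, pow_succ, mul_comm]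
  · have h1 : E ∩ A = ∅ := by
      ext ω
      simp only [Set.mem_inter_iff, Set.mem_empty_iff_false, iff_false, not_and]
      intro hωE hωA
      exact hq ((hsub ω hωA).1 hωE)
    have h2 : (E ∩ {ω | X t ω = w}) ∩ A = ∅ := by
      rw [Set.inter_assoc, Set.inter_comm {ω | X t ω = w} A, ← Set.inter_assoc, h1]
      simp
    rw [h1, h2]
    simp

lemma key_lemma (hXm : ∀ g, Measurable (X g))
    (hXi : iIndepFun X μ)
    (hXd : ∀ g a, μ {ω | X g ω = a} = 1/2) :
    ∀ (n : ℕ) (C : Finset (FreeGroup (Fin 2) × Fin 2)), C.card = n →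
    ∀ c : FreeGroup (Fin 2) × Fin 2 → Fin 2,
    μ (⋂ e ∈ C, {ω | X e.1 ω + X (e.1 * FreeGroup.of e.2) ω = c e})
      = (1/2 : ENNReal) ^ n := by
  classical
  intro n
  induction n with
  | zero =>
    intro C hC c
    rw [Finset.card_eq_zero.1 hC]
    simp
  | succ n ih =>
    intro C hC c
    have hCne : C.Nonempty := Finset.card_pos.1 (by omega)
    obtain ⟨e₀, he₀, t, hinc, hleaf⟩ := exists_leaf C hCne
    set C' := C.erase e₀ with hC'def
    have hC' : C'.card = n := by
      rw [hC'def, Finset.card_erase_of_mem he₀, hC]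
      omega
    set s' : FreeGroup (Fin 2) := if t = e₀.1 then e₀.1 * FreeGroup.of e₀.2 else e₀.1 with hs'
    have hne : e₀.1 ≠ e₀.1 * FreeGroup.of e₀.2 := by
      intro hcon
      have h1 : (1 : FreeGroup (Fin 2)) = FreeGroup.of e₀.2 :=
        mul_left_cancel (a := e₀.1) (by rw [mul_one, ← hcon])
      exact FreeGroup.of_ne_one e₀.2 h1.symm
    have hts' : t ≠ s' := by
      rcases hinc with h | h
      · rw [hs', if_pos h, h]; exact hne
      · by_cases h2 : t = e₀.1
        · rw [hs', if_pos h2, h2]; exact hne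
        · rw [hs', if_neg h2]; exact h2
    have hpair : ∀ ω, (X e₀.1 ω + X (e₀.1 * FreeGroup.of e₀.2) ω = c e₀)
        ↔ (X t ω + X s' ω = c e₀) := by
      intro ω
      rcases hinc with h | h
      · rw [hs', if_pos h, ← h]
      · by_cases h2 : t = e₀.1
        · rw [hs', if_pos h2, ← h2]
        · rw [hs', if_neg h2, ← h, add_comm]
    set T : Finset (FreeGroup (Fin 2)) :=
      (C'.image Prod.fst ∪ C'.image (fun e => e.1 * FreeGroup.of e.2)) ∪ {s'} with hT
    have htT : t ∉ T := by
      rw [hT]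
      simp only [Finset.mem_union, Finset.mem_image, Finset.mem_singleton]
      rintro ((⟨e, he, rfl⟩ | ⟨e, he, rfl⟩) | h)
      · exact (hleaf e (Finset.mem_of_mem_erase he) (Finset.ne_of_mem_erase he)).1 rfl
      · exact (hleaf e (Finset.mem_of_mem_erase he) (Finset.ne_of_mem_erase he)).2 rfl
      · exact hts' h
    set B := ⋂ e ∈ C', {ω | X e.1 ω + X (e.1 * FreeGroup.of e.2) ω = c e} with hB
    have hBmeas : MeasurableSet B := by
      rw [hB]
      exact MeasurableSet.biInter C'.countable_toSet (fun e _ => add_meas X hXm _ _ _)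
    have hsplit : (⋂ e ∈ C, {ω | X e.1 ω + X (e.1 * FreeGroup.of e.2) ω = c e})
        = B ∩ {ω | X t ω + X s' ω = c e₀} := by
      conv_lhs => rw [← Finset.insert_erase he₀]
      rw [Finset.set_biInter_insert, ← hC'def, ← hB, Set.inter_comm]
      congr 1
      ext ω
      exact hpair ω
    have hPv : ∀ v : Fin 2, B ∩ {ω | X s' ω = v} =
        {ω | (∀ e ∈ C', (fun u => X u ω) e.1 + (fun u => X u ω) (e.1 * FreeGroup.of e.2) = c e)
          ∧ (fun u => X u ω) s' = v} := by
      intro v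
      ext ω
      simp only [hB, Set.mem_inter_iff, Set.mem_iInter, Set.mem_setOf_eq]
    have hPvsup : ∀ v : Fin 2, ∀ x y : FreeGroup (Fin 2) → Fin 2, (∀ u ∈ T, x u = y u) →
        ((∀ e ∈ C', x e.1 + x (e.1 * FreeGroup.of e.2) = c e) ∧ x s' = v) →
        ((∀ e ∈ C', y e.1 + y (e.1 * FreeGroup.of e.2) = c e) ∧ y s' = v) := by
      rintro v x y hxy ⟨h1, h2⟩
      have hmem1 : ∀ e ∈ C', e.1 ∈ T := by
        intro e he
        rw [hT]; simp only [Finset.mem_union, Finset.mem_image]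
        exact Or.inl (Or.inl ⟨e, he, rfl⟩)
      have hmem2 : ∀ e ∈ C', e.1 * FreeGroup.of e.2 ∈ T := by
        intro e he
        rw [hT]; simp only [Finset.mem_union, Finset.mem_image]
        exact Or.inl (Or.inr ⟨e, he, rfl⟩)
      have hmem3 : s' ∈ T := by rw [hT]; simp
      constructor
      · intro e he
        rw [← hxy e.1 (hmem1 e he), ← hxy _ (hmem2 e he)]
        exact h1 e he
      · rw [← hxy s' hmem3]; exact h2
    have hPvmeas : ∀ v : Fin 2, MeasurableSet (B ∩ {ω | X s' ω = v}) :=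
      fun v => hBmeas.inter ((hXm s') (measurableSet_singleton v))
    have hpeel : ∀ v w : Fin 2, μ ((B ∩ {ω | X s' ω = v}) ∩ {ω | X t ω = w})
        = 1/2 * μ (B ∩ {ω | X s' ω = v}) := by
      intro v w
      rw [hPv v]
      exact peel μ X hXm hXi hXd T t htT _ (hPvsup v) (by rw [← hPv v]; exact hPvmeas v) w
    have hedge : B ∩ {ω | X t ω + X s' ω = c e₀}
        = ((B ∩ {ω | X s' ω = 0}) ∩ {ω | X t ω = c e₀ + 0})
          ∪ ((B ∩ {ω | X s' ω = 1}) ∩ {ω | X t ω = c e₀ + 1}) := by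
      ext ω
      simp only [Set.mem_inter_iff, Set.mem_union, Set.mem_setOf_eq]
      constructor
      · rintro ⟨hωB, hsum⟩
        rcases fin2_cases' (X s' ω) with h | h
        · refine Or.inl ⟨⟨hωB, h⟩, ?_⟩
          rw [h] at hsum
          exact (fin2_add_iff _ _ _).1 hsum
        · refine Or.inr ⟨⟨hωB, h⟩, ?_⟩
          rw [h] at hsum
          exact (fin2_add_iff _ _ _).1 hsum
      · rintro (⟨⟨hωB, h⟩, hx⟩ | ⟨⟨hωB, h⟩, hx⟩) <;>
        · refine ⟨hωB, ?_⟩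
          rw [h, hx]
          exact (fin2_add_iff _ _ _).2 rfl
    have hdisj2 : Disjoint ((B ∩ {ω | X s' ω = 0}) ∩ {ω | X t ω = c e₀ + 0})
        ((B ∩ {ω | X s' ω = 1}) ∩ {ω | X t ω = c e₀ + 1}) := by
      rw [Set.disjoint_left]
      rintro ω ⟨⟨-, h0⟩, -⟩ ⟨⟨-, h1⟩, -⟩
      rw [Set.mem_setOf_eq] at h0 h1
      rw [h0] at h1
      exact fin2_ne01 h1
    have hBsplit : μ (B ∩ {ω | X s' ω = 0}) + μ (B ∩ {ω | X s' ω = 1}) = μ B := by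
      have hdiff : B ∩ {ω | X s' ω = 1} = B \ {ω | X s' ω = 0} := by
        ext ω
        simp only [Set.mem_inter_iff, Set.mem_diff, Set.mem_setOf_eq]
        constructor
        · rintro ⟨h, h1⟩
          refine ⟨h, ?_⟩
          rw [h1]
          exact fun hcon => fin2_ne01 hcon.symm
        · rintro ⟨h, h1⟩
          exact ⟨h, fin2_not0 _ h1⟩
      rw [hdiff]
      exact measure_inter_add_diff B ((hXm s') (measurableSet_singleton 0))
    have hμB : μ B = (1/2 : ENNReal)^n := by
      rw [hB]
      exact ih C' hC' c
    rw [hsplit, hedge, measure_union hdisj2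
        ((hPvmeas 1).inter ((hXm t) (measurableSet_singleton _))),
      hpeel 0 _, hpeel 1 _, ← mul_add, hBsplit, hμB, pow_succ, mul_comm]

end Meas

/-- Ornstein–Weiss: if `(X_g)` are i.i.d. Bernoulli(1/2) indexed by the
free group F on two generators a, b, then the family
`φ(X)(g) = (X(g) ⊕ X(ga), X(g) ⊕ X(gb))` is i.i.d. uniform on {0,1}²: the variables
indexed by the group elements are jointly independent and each is uniform on
`Fin 2 × Fin 2`. -/
theorem stmt13 {Ω : Type*} [MeasurableSpace Ω] (μ : Measure Ω) [IsProbabilityMeasure μ]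
    (X : FreeGroup (Fin 2) → Ω → Fin 2) (hXm : ∀ g, Measurable (X g))
    (hXi : iIndepFun X μ)
    (hXd : ∀ (g : FreeGroup (Fin 2)) (a : Fin 2), μ {ω | X g ω = a} = 1/2)
    (a b : FreeGroup (Fin 2)) (ha : a = FreeGroup.of 0) (hb : b = FreeGroup.of 1)
    (Y : FreeGroup (Fin 2) → Ω → Fin 2 × Fin 2)
    (hY : Y = fun g ω => (X g ω + X (g * a) ω, X g ω + X (g * b) ω)) :
    iIndepFun Y μ ∧
    ∀ (g : FreeGroup (Fin 2)) (c : Fin 2 × Fin 2), μ {ω | Y g ω = c} = 1/4 := by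
  classical
  subst ha hb hY
  -- measurability of Y
  have hYm : ∀ g, Measurable fun ω =>
      (X g ω + X (g * FreeGroup.of 0) ω, X g ω + X (g * FreeGroup.of 1) ω) := by
    intro g
    apply measurable_to_countable'
    intro p
    have hpre : (fun ω => (X g ω + X (g * FreeGroup.of 0) ω, X g ω + X (g * FreeGroup.of 1) ω))
        ⁻¹' {p} = {ω | X g ω + X (g * FreeGroup.of 0) ω = p.1}
          ∩ {ω | X g ω + X (g * FreeGroup.of 1) ω = p.2} := by
      ext ω
      simp [Prod.ext_iff]
    rw [hpre]
    exact (add_meas X hXm _ _ _).inter (add_meas X hXm _ _ _)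
  -- joint distribution of finitely many Y's
  have hμY : ∀ (S : Finset (FreeGroup (Fin 2))) (c : FreeGroup (Fin 2) → Fin 2 × Fin 2),
      μ (⋂ g ∈ S, {ω | (X g ω + X (g * FreeGroup.of 0) ω, X g ω + X (g * FreeGroup.of 1) ω)
        = c g}) = (1/4 : ENNReal) ^ S.card := by
    intro S c
    have hseteq : (⋂ g ∈ S, {ω |
          (X g ω + X (g * FreeGroup.of 0) ω, X g ω + X (g * FreeGroup.of 1) ω) = c g})
        = ⋂ e ∈ S ×ˢ (Finset.univ : Finset (Fin 2)),
          {ω | X e.1 ω + X (e.1 * FreeGroup.of e.2) ω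
            = (if e.2 = 0 then (c e.1).1 else (c e.1).2)} := by
      ext ω
      simp only [Set.mem_iInter, Set.mem_setOf_eq, Finset.mem_product, Finset.mem_univ,
        and_true, Prod.forall, Prod.ext_iff]
      constructor
      · rintro h g k hg
        rcases (by decide : ∀ k : Fin 2, k = 0 ∨ k = 1) k with rfl | rfl
        · simpa using (h g hg).1
        · simpa using (h g hg).2
      · intro h g hg
        constructor
        · simpa using h g 0 hg
        · simpa using h g 1 hg
    rw [hseteq, key_lemma μ X hXm hXi hXd ((S ×ˢ (Finset.univ : Finset (Fin 2))).card) _ rfl,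
      Finset.card_product]
    simp only [Finset.card_univ, Fintype.card_fin]
    rw [mul_comm, pow_mul]
    congr 1
    rw [one_div, one_div, ← ENNReal.inv_pow]
    congr 1
    norm_num
  have hsingle : ∀ (g : FreeGroup (Fin 2)) (p : Fin 2 × Fin 2),
      μ {ω | (X g ω + X (g * FreeGroup.of 0) ω, X g ω + X (g * FreeGroup.of 1) ω) = p}
        = 1/4 := by
    intro g p
    have := hμY {g} (fun _ => p)
    simpa using this
  refine ⟨?_, fun g c => hsingle g c⟩
  -- independence
  rw [iIndepFun_iff_measure_inter_preimage_eq_mul]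
  intro S sets hsets
  set Y : FreeGroup (Fin 2) → Ω → Fin 2 × Fin 2 :=
    fun g ω => (X g ω + X (g * FreeGroup.of 0) ω, X g ω + X (g * FreeGroup.of 1) ω) with hYdef
  have hYatom : ∀ (g : FreeGroup (Fin 2)) (p : Fin 2 × Fin 2),
      MeasurableSet {ω | Y g ω = p} := by
    intro g p
    have : {ω | Y g ω = p} = Y g ⁻¹' {p} := rfl
    rw [this]
    exact (hYm g) (measurableSet_singleton p)
  have hEmeas : MeasurableSet (⋂ g ∈ S, Y g ⁻¹' sets g) :=
    MeasurableSet.biInter S.countable_toSet (fun g hg => (hYm g) (hsets g hg))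
  -- expand single preimage
  have hpre : ∀ g : FreeGroup (Fin 2), μ (Y g ⁻¹' sets g)
      = ∑ p : Fin 2 × Fin 2, (if p ∈ sets g then (1/4 : ENNReal) else 0) := by
    intro g
    have hcover : Y g ⁻¹' sets g
        = ⋃ p : Fin 2 × Fin 2, (if p ∈ sets g then {ω | Y g ω = p} else ∅) := by
      ext ω
      simp only [Set.mem_preimage, Set.mem_iUnion]
      constructor
      · intro h
        exact ⟨Y g ω, by rw [if_pos h]; exact rfl⟩
      · rintro ⟨p, hp⟩
        by_cases hmem : p ∈ sets g
        · rw [if_pos hmem] at hp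
          rw [Set.mem_setOf_eq] at hp
          rw [hp]; exact hmem
        · rw [if_neg hmem] at hp; exact absurd hp (Set.notMem_empty ω)
    rw [hcover, measure_iUnion ?_ ?_, tsum_fintype]
    · apply Finset.sum_congr rfl
      intro p _
      by_cases hmem : p ∈ sets g
      · rw [if_pos hmem, if_pos hmem, hsingle g p]
      · rw [if_neg hmem, if_neg hmem, measure_empty]
    · intro p q hpq
      rw [Function.onFun, Set.disjoint_left]
      intro ω h1 h2
      apply hpq
      split at h1
      · split at h2
        · rw [Set.mem_setOf_eq] at h1 h2
          rw [← h1, ← h2]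
        · exact absurd h2 (Set.notMem_empty ω)
      · exact absurd h1 (Set.notMem_empty ω)
    · intro p
      split
      · exact hYatom g p
      · exact MeasurableSet.empty
  -- expand the intersection via Y-atoms
  rw [sum_partition μ Y hYm S _ hEmeas]
  have hterm : ∀ q : ↥S → Fin 2 × Fin 2,
      μ ((⋂ g ∈ S, Y g ⁻¹' sets g) ∩ ⋂ g ∈ S, {ω | Y g ω = Sext S q g})
        = if (∀ g : ↥S, q g ∈ sets g.1) then (1/4 : ENNReal) ^ S.card else 0 := by
    intro q
    by_cases hq : ∀ g : ↥S, q g ∈ sets g.1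
    · rw [if_pos hq]
      have hsub : (⋂ g ∈ S, {ω | Y g ω = Sext S q g}) ⊆ ⋂ g ∈ S, Y g ⁻¹' sets g := by
        intro ω hω
        simp only [Set.mem_iInter, Set.mem_setOf_eq] at hω ⊢
        intro g hg
        have := hω g hg
        rw [Set.mem_preimage, this, Sext, dif_pos hg]
        exact hq ⟨g, hg⟩
      rw [Set.inter_eq_self_of_subset_right hsub]
      exact hμY S (Sext S q)
    · rw [if_neg hq]
      push_neg at hq
      obtain ⟨g, hg⟩ := hq
      have hempty : ((⋂ g ∈ S, Y g ⁻¹' sets g) ∩ ⋂ g ∈ S, {ω | Y g ω = Sext S q g}) = ∅ := by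
        ext ω
        simp only [Set.mem_inter_iff, Set.mem_iInter, Set.mem_empty_iff_false, iff_false,
          not_and]
        intro h1 h2
        have e1 := h1 g.1 g.2
        have e2 := h2 g.1 g.2
        rw [Set.mem_setOf_eq] at e2
        rw [Set.mem_preimage, e2, Sext, dif_pos g.2] at e1
        exact hg e1
      rw [hempty, measure_empty]
  rw [Finset.sum_congr rfl (fun q _ => hterm q)]
  -- compute the RHS
  have hRHS : ∏ g ∈ S, μ (Y g ⁻¹' sets g)
      = ∑ q : ↥S → Fin 2 × Fin 2,
          (if (∀ g : ↥S, q g ∈ sets g.1) then (1/4 : ENNReal) ^ S.card else 0) := by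
    calc ∏ g ∈ S, μ (Y g ⁻¹' sets g)
        = ∏ g : ↥S, μ (Y g.1 ⁻¹' sets g.1) := by
          rw [Finset.univ_eq_attach, Finset.prod_attach S (fun x => μ (Y x ⁻¹' sets x))]
      _ = ∏ g : ↥S, ∑ p : Fin 2 × Fin 2, (if p ∈ sets g.1 then (1/4 : ENNReal) else 0) :=
          Finset.prod_congr rfl fun g _ => hpre g.1
      _ = ∑ q ∈ Fintype.piFinset (fun _ : ↥S => (Finset.univ : Finset (Fin 2 × Fin 2))),
            ∏ g : ↥S, (if q g ∈ sets g.1 then (1/4 : ENNReal) else 0) :=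
          Finset.prod_univ_sum _ _
      _ = ∑ q : ↥S → Fin 2 × Fin 2,
            ∏ g : ↥S, (if q g ∈ sets g.1 then (1/4 : ENNReal) else 0) := by
          rw [Fintype.piFinset_univ]
      _ = ∑ q : ↥S → Fin 2 × Fin 2,
            (if (∀ g : ↥S, q g ∈ sets g.1) then (1/4 : ENNReal) ^ S.card else 0) := by
          apply Finset.sum_congr rfl
          intro q _
          by_cases hq : ∀ g : ↥S, q g ∈ sets g.1
          · rw [if_pos hq, Finset.prod_congr rfl (fun g _ => if_pos (hq g)),
              Finset.prod_const, Finset.card_univ, Fintype.card_coe]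
          · rw [if_neg hq]
            push_neg at hq
            obtain ⟨g, hg⟩ := hq
            exact Finset.prod_eq_zero (Finset.mem_univ g) (if_neg hg)
  rw [hRHS]
end
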